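/- Let P = [[A,B],[C,D]] ∈ Sp(2k) and let x ∈ ℝ^k with Bx = 0 and x ≠ 0. Then for the vector v = (0,x) ∈ ℝ^{2k} and any ε with 0 < ε small (specifically sin(2ε) > 0), one has ⟨M_ε(P)v, v⟩ = −sin(2ε)·⟨(DᵀD + I_k)x, x⟩ < 0. -/

import Mathlib

open Matrix BigOperators

noncomputable section

/-- The standard symplectic matrix `J = [[0, -I],[I, 0]]`. -/
def Jmat (ι : Type*) [Fintype ι] [DecidableEq ι] : Matrix (ι ⊕ ι) (ι ⊕ ι) ℝ :=
  Matrix.fromBlocks 0 (-1) 1 0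

/-- `M` is symplectic iff `Mᵀ J M = J`. -/
def IsSymplectic {ι : Type*} [Fintype ι] [DecidableEq ι]
    (M : Matrix (ι ⊕ ι) (ι ⊕ ι) ℝ) : Prop :=
  Mᵀ * Jmat ι * M = Jmat ι

/-- The matrix `M_ε(P)`. -/
def Mmat {ι : Type*} [Fintype ι] [DecidableEq ι] (ε : ℝ)
    (P : Matrix (ι ⊕ ι) (ι ⊕ ι) ℝ) : Matrix (ι ⊕ ι) (ι ⊕ ι) ℝ :=
  Pᵀ * Matrix.fromBlocks (Real.sin (2*ε) • 1) (-(Real.cos (2*ε)) • 1)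
      (-(Real.cos (2*ε)) • 1) (-(Real.sin (2*ε)) • 1) * P
    + Matrix.fromBlocks (Real.sin (2*ε) • 1) (Real.cos (2*ε) • 1)
      (Real.cos (2*ε) • 1) (-(Real.sin (2*ε)) • 1)

/-- `N = diag(-I, I)`. -/
def Nmat (ι : Type*) [Fintype ι] [DecidableEq ι] : Matrix (ι ⊕ ι) (ι ⊕ ι) ℝ :=
  Matrix.fromBlocks (-1) 0 0 1

/-- `m⁺(F)`: dimension of a maximal subspace on which the quadratic form of `F`
is positive definite. -/
def posDim {ι : Type*} [Fintype ι] (F : Matrix ι ι ℝ) : ℕ :=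
  sSup {d : ℕ | ∃ W : Submodule ℝ (ι → ℝ), Module.finrank ℝ W = d ∧
    ∀ v ∈ W, v ≠ 0 → 0 < F.mulVec v ⬝ᵥ v}

/-- `m⁻(F)`: dimension of a maximal subspace on which the quadratic form of `F`
is negative definite. -/
def negDim {ι : Type*} [Fintype ι] (F : Matrix ι ι ℝ) : ℕ :=
  sSup {d : ℕ | ∃ W : Submodule ℝ (ι → ℝ), Module.finrank ℝ W = d ∧
    ∀ v ∈ W, v ≠ 0 → F.mulVec v ⬝ᵥ v < 0}

/-- The signature `sgn F = m⁺(F) - m⁻(F)`. -/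
def signat {ι : Type*} [Fintype ι] (F : Matrix ι ι ℝ) : ℤ :=
  (posDim F : ℤ) - (negDim F : ℤ)

/-- The `⋄`-product (symplectic direct sum) of two matrices. -/
def diamond {ι₁ ι₂ : Type*}
    (M₁ : Matrix (ι₁ ⊕ ι₁) (ι₁ ⊕ ι₁) ℝ) (M₂ : Matrix (ι₂ ⊕ ι₂) (ι₂ ⊕ ι₂) ℝ) :
    Matrix ((ι₁ ⊕ ι₂) ⊕ (ι₁ ⊕ ι₂)) ((ι₁ ⊕ ι₂) ⊕ (ι₁ ⊕ ι₂)) ℝ :=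
  Matrix.fromBlocks
    (Matrix.fromBlocks (M₁.submatrix Sum.inl Sum.inl) 0 0 (M₂.submatrix Sum.inl Sum.inl))
    (Matrix.fromBlocks (M₁.submatrix Sum.inl Sum.inr) 0 0 (M₂.submatrix Sum.inl Sum.inr))
    (Matrix.fromBlocks (M₁.submatrix Sum.inr Sum.inl) 0 0 (M₂.submatrix Sum.inr Sum.inl))
    (Matrix.fromBlocks (M₁.submatrix Sum.inr Sum.inr) 0 0 (M₂.submatrix Sum.inr Sum.inr))

end

/-- For `x ∈ ker B`, `x ≠ 0`, and `sin 2ε > 0`, the quadratic form of `M_ε(P)` at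
`v = (0, x)` equals `-sin(2ε)⟨(DᵀD+I)x, x⟩ < 0`. -/
theorem M_eps_neg_on_kerB {k : ℕ} (A B C D : Matrix (Fin k) (Fin k) ℝ)
    (h : IsSymplectic (Matrix.fromBlocks A B C D))
    (x : Fin k → ℝ) (hx : B.mulVec x = 0) (hx0 : x ≠ 0)
    (ε : ℝ) (hε : 0 < ε) (hs : 0 < Real.sin (2 * ε)) :
    (Mmat ε (Matrix.fromBlocks A B C D)).mulVec (Sum.elim 0 x) ⬝ᵥ (Sum.elim 0 x) =
      -(Real.sin (2 * ε)) * ((Dᵀ * D + 1).mulVec x ⬝ᵥ x) ∧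
    (Mmat ε (Matrix.fromBlocks A B C D)).mulVec (Sum.elim 0 x) ⬝ᵥ (Sum.elim 0 x) < 0 := by
  set s := Real.sin (2 * ε) with hsdef
  set c := Real.cos (2 * ε) with hcdef
  set P := Matrix.fromBlocks A B C D with hP
  set v : (Fin k ⊕ Fin k) → ℝ := Sum.elim 0 x with hv
  set w := D.mulVec x with hw
  have hPv : P.mulVec v = Sum.elim (0 : Fin k → ℝ) w := by
    rw [hP, hv, Matrix.fromBlocks_mulVec]
    simp [hx, hw]
  have hwnn : (0:ℝ) ≤ w ⬝ᵥ w := Finset.sum_nonneg fun i _ => mul_self_nonneg _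
  have hxpos : (0:ℝ) < x ⬝ᵥ x :=
    lt_of_le_of_ne (Finset.sum_nonneg fun i _ => mul_self_nonneg (x i))
      (fun heq => hx0 (dotProduct_self_eq_zero.mp heq.symm))
  have key : (Mmat ε P).mulVec v ⬝ᵥ v = -s * (w ⬝ᵥ w + x ⬝ᵥ x) := by
    rw [Mmat, Matrix.add_mulVec, add_dotProduct]
    have t1 : (Pᵀ * Matrix.fromBlocks (s • 1) (-c • 1) (-c • 1) (-s • 1) * P).mulVec v ⬝ᵥ v
        = -s * (w ⬝ᵥ w) := by
      rw [← Matrix.mulVec_mulVec, ← Matrix.mulVec_mulVec, Matrix.mulVec_transpose,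
        ← dotProduct_mulVec, hPv]
      rw [Matrix.fromBlocks_mulVec]
      simp [neg_smul, Matrix.neg_mulVec, Matrix.smul_mulVec, Matrix.one_mulVec,
        sumElim_dotProduct_sumElim, neg_dotProduct, dotProduct_neg,
        smul_dotProduct, smul_eq_mul]
    have t2 : (Matrix.fromBlocks (s • 1) (c • 1) (c • 1) (-s • 1)).mulVec v ⬝ᵥ v
        = -s * (x ⬝ᵥ x) := by
      rw [hv, Matrix.fromBlocks_mulVec]
      simp [neg_smul, Matrix.neg_mulVec, Matrix.smul_mulVec, Matrix.one_mulVec,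
        sumElim_dotProduct_sumElim, neg_dotProduct, dotProduct_neg,
        smul_dotProduct, smul_eq_mul]
    rw [t1, t2]; ring
  have rhs : (Dᵀ * D + 1).mulVec x ⬝ᵥ x = w ⬝ᵥ w + x ⬝ᵥ x := by
    rw [Matrix.add_mulVec, Matrix.one_mulVec, add_dotProduct,
      ← Matrix.mulVec_mulVec, Matrix.mulVec_transpose, ← dotProduct_mulVec, ← hw]
  constructor
  · rw [key, rhs]
  · rw [key]
    have : 0 < w ⬝ᵥ w + x ⬝ᵥ x := by linarith
    nlinarith
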